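/- arXiv:0804.2333 — 2 statements merged into one kernel-verified Lean document; each statement's English description precedes it below -/
import Mathlib

section
/- If g : [a,b] → ℝ is Riemann integrable, G(t) := c + ∫_a^t g, f is bounded on the range of G, and (f ∘ G)·g is Riemann integrable on [a,b], then f is Riemann integrable on the range of G and ∫_{G(a)}^{G(b)} f = ∫_a^b (f ∘ G)·g. -/
open MeasureTheory Set
open intervalIntegral Topology Filter


lemma aux_aesm {f : ℝ → ℝ} {s : Set ℝ} (hs : MeasurableSet s)
    (h : ∀ᵐ x ∂(volume.restrict s), ContinuousWithinAt f s x) :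
    AEStronglyMeasurable f (volume.restrict s) := by
  rw [ae_iff] at h
  obtain ⟨u, hsub, hum, hu0⟩ := exists_measurable_superset_of_null h
  have hs' : MeasurableSet (s \ u) := hs.diff hum
  have hcont : ContinuousOn f (s \ u) := by
    intro x hx
    have hx1 : ContinuousWithinAt f s x := by
      by_contra hc
      exact hx.2 (hsub (by simpa [Measure.restrict_apply] using hc))
    exact hx1.mono diff_subset
  have heq : volume.restrict s = volume.restrict (s \ u) := by
    apply Measure.restrict_congr_set
    refine (ae_le_set.2 ?_).antisymm (HasSubset.Subset.eventuallyLE diff_subset)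
    have hss : s \ (s \ u) ⊆ u ∩ s := by intro x hx; simp at hx; tauto
    exact measure_mono_null hss (by simpa [Measure.restrict_apply hum] using hu0)
  rw [heq]
  exact (hcont.aemeasurable hs').aestronglyMeasurable

lemma aux_int {f : ℝ → ℝ} {s : Set ℝ} (hs : MeasurableSet s) (hfin : volume s < ⊤)
    (hm : AEStronglyMeasurable f (volume.restrict s)) {C : ℝ} (hC : ∀ x ∈ s, |f x| ≤ C) :
    IntegrableOn f s := by
  apply Integrable.mono' (integrableOn_const hfin.ne) hm
  exact (ae_restrict_iff' hs).2 (ae_of_all _ (fun x hx => by simpa using hC x hx))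

lemma aux_lip_null {f : ℝ → ℝ} {K : NNReal} (hf : LipschitzWith K f) {s : Set ℝ}
    (hs : volume s = 0) : volume (f '' s) = 0 := by
  have h := hf.hausdorffMeasure_image_le (zero_le_one) s
  rw [hausdorffMeasure_real] at h
  simpa [hs] using h

lemma aux_sard {f : ℝ → ℝ} {s : Set ℝ} (hf : ∀ x ∈ s, HasDerivWithinAt f 0 s x) :
    volume (f '' s) = 0 := by
  apply addHaar_image_eq_zero_of_det_fderivWithin_eq_zero volume
    (f' := fun _ => (ContinuousLinearMap.smulRight (1 : ℝ →L[ℝ] ℝ) (0 : ℝ)))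
    (fun x hx => (hf x hx).hasFDerivWithinAt)
  intro x _
  have h : ((ContinuousLinearMap.smulRight (1:ℝ →L[ℝ] ℝ) (0:ℝ)) : ℝ →ₗ[ℝ] ℝ)
      = (0 : ℝ →ₗ[ℝ] ℝ) := by ext; simp
  show LinearMap.det _ = 0
  rw [h]
  exact LinearMap.det_zero' (Module.Basis.singleton Unit ℝ)

lemma aux_slope {H : ℝ → ℝ} {t L : ℝ} (h : HasDerivAt H L t) :
    Tendsto (fun n : ℕ => (H (t + 1/(n+1)) - H t) / (1/(n+1))) atTop (𝓝 L) := by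
  have h1 := (hasDerivAt_iff_tendsto_slope.1 h)
  have h2 : Tendsto (fun n : ℕ => t + 1/(n+1)) atTop (𝓝[≠] t) := by
    rw [tendsto_nhdsWithin_iff]
    constructor
    · simpa using (tendsto_const_nhds (x := t)).add tendsto_one_div_add_atTop_nhds_zero_nat
    · refine Eventually.of_forall (fun n => ?_)
      simp only [mem_compl_iff, mem_singleton_iff]
      intro hh
      have h3 : (1:ℝ)/(n+1) = 0 := by linarith
      rw [div_eq_zero_iff] at h3
      rcases h3 with h3 | h3
      · exact one_ne_zero h3
      · exact (Nat.cast_add_one_ne_zero n) h3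
  have h4 := h1.comp h2
  refine h4.congr (fun n => ?_)
  simp only [slope_def_field, Function.comp]
  rw [div_eq_div_iff] <;> ring_nf
  · positivity
  · positivity

lemma aux_squeeze {F G₁ : ℝ → ℝ} {K : NNReal} (hF : LipschitzWith K F) {t : ℝ}
    (hG : HasDerivAt G₁ 0 t) : HasDerivAt (fun s => F (G₁ s)) 0 t := by
  rw [hasDerivAt_iff_isLittleO] at hG ⊢
  simp only [smul_zero, sub_zero] at hG ⊢
  have hO : (fun s => F (G₁ s) - F (G₁ t)) =O[𝓝 t] (fun s => G₁ s - G₁ t) := by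
    apply Asymptotics.IsBigO.of_bound K
    refine Eventually.of_forall (fun s => ?_)
    have h1 := hF.dist_le_mul (G₁ s) (G₁ t)
    simpa [Real.dist_eq, Real.norm_eq_abs] using h1
  exact hO.trans_isLittleO hG


lemma contAt_transfer (G₁ g f : ℝ → ℝ) (t δ₀ : ℝ) (hδ₀ : 0 < δ₀)
    (hGcont : Continuous G₁)
    (hgi : IntervalIntegrable g volume (t - δ₀) (t + δ₀))
    (hint : ∀ u ∈ Icc (t - δ₀) (t + δ₀), ∀ v ∈ Icc (t - δ₀) (t + δ₀),
      G₁ v - G₁ u = ∫ x in u..v, g x)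
    (hgc : ContinuousAt g t) (hgne : g t ≠ 0)
    (hfgc : ContinuousAt (fun s => f (G₁ s) * g s) t) :
    ContinuousAt f (G₁ t) := by
  set ε := |g t| / 2 with hε
  have hεpos : 0 < ε := by positivity
  obtain ⟨δ₁, hδ₁pos, hδ₁⟩ := Metric.continuousAt_iff.1 hgc ε hεpos
  set δ := min δ₀ (δ₁ / 2) with hδdef
  have hδpos : 0 < δ := lt_min hδ₀ (by linarith)
  have hδle : δ ≤ δ₀ := min_le_left _ _
  have hδle1 : δ < δ₁ := lt_of_le_of_lt (min_le_right _ _) (by linarith)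
  set K := Icc (t - δ) (t + δ) with hK
  have hKsub : K ⊆ Icc (t - δ₀) (t + δ₀) := Icc_subset_Icc (by linarith) (by linarith)
  have huIcc : ∀ u ∈ K, ∀ v ∈ K, uIcc u v ⊆ K := fun u hu v hv => uIcc_subset_Icc hu hv
  have hKball : ∀ s ∈ K, |g s - g t| < ε := by
    intro s hs
    have h1 : |s - t| ≤ δ := abs_sub_le_iff.2 ⟨by linarith [hs.2], by linarith [hs.1]⟩
    have := hδ₁ (show dist s t < δ₁ by rw [Real.dist_eq]; linarith)
    rwa [Real.dist_eq] at this
  have hest : ∀ u ∈ K, ∀ v ∈ K, |G₁ v - G₁ u - g t * (v - u)| ≤ ε * |v - u| := by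
    intro u hu v hv
    have hi : IntervalIntegrable g volume u v :=
      hgi.mono_set (((huIcc u hu v hv).trans hKsub).trans (Icc_subset_uIcc))
    have heq : G₁ v - G₁ u - g t * (v - u) = ∫ x in u..v, (g x - g t) := by
      rw [intervalIntegral.integral_sub hi intervalIntegrable_const,
        intervalIntegral.integral_const, hint u (hKsub hu) v (hKsub hv)]
      simp [smul_eq_mul]; ring
    rw [heq]
    have hb := intervalIntegral.norm_integral_le_of_norm_le_const
      (C := ε) (f := fun x => g x - g t) (a := u) (b := v) ?_
    · simpa [Real.norm_eq_abs] using hb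
    · intro x hx
      exact (hKball x ((huIcc u hu v hv) (uIoc_subset_uIcc hx))).le
  have hlow : ∀ u ∈ K, ∀ v ∈ K, ε * |v - u| ≤ |G₁ v - G₁ u| := by
    intro u hu v hv
    have h1 := hest u hu v hv
    have h3 : |g t * (v - u)| - |G₁ v - G₁ u| ≤ |G₁ v - G₁ u - g t * (v - u)| := by
      rw [abs_sub_comm (G₁ v - G₁ u)]
      exact abs_sub_abs_le_abs_sub _ _
    rw [abs_mul] at h3
    have h4 : |g t| = 2 * ε := by rw [hε]; ring
    rw [h4] at h3
    nlinarith [abs_nonneg (v - u)]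
  set ρ := ε * δ with hρ
  have hρpos : 0 < ρ := by positivity
  have htK : t ∈ K := ⟨by linarith, by linarith⟩
  have htmK : t - δ ∈ K := ⟨le_refl _, by linarith⟩
  have htpK : t + δ ∈ K := ⟨by linarith, le_refl _⟩
  have hsurj : Icc (G₁ t - ρ) (G₁ t + ρ) ⊆ G₁ '' K := by
    have h1 := hest t htK (t + δ) htpK
    have h2 := hest (t - δ) htmK t htK
    simp only [add_sub_cancel_left, sub_sub_cancel, abs_of_pos hδpos] at h1 h2
    have h1' := abs_sub_le_iff.1 h1
    have h2' := abs_sub_le_iff.1 h2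
    rcases lt_or_gt_of_ne hgne with hneg | hpos
    · have hgt : g t = -(2 * ε) := by rw [hε, abs_of_neg hneg]; ring
      have hm : g t * δ = -(2 * ε) * δ := by rw [hgt]
      have e1 : G₁ (t + δ) ≤ G₁ t - ρ := by rw [hρ]; nlinarith [h1'.1]
      have e2 : G₁ t + ρ ≤ G₁ (t - δ) := by rw [hρ]; nlinarith [h2'.1]
      intro y hy
      exact intermediate_value_Icc' (by linarith : t - δ ≤ t + δ) hGcont.continuousOn
        ⟨by linarith [hy.1], by linarith [hy.2]⟩
    · have hgt : g t = 2 * ε := by rw [hε, abs_of_pos hpos]; ring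
      have hm : g t * δ = 2 * ε * δ := by rw [hgt]
      have e1 : G₁ t + ρ ≤ G₁ (t + δ) := by rw [hρ]; nlinarith [h1'.2]
      have e2 : G₁ (t - δ) ≤ G₁ t - ρ := by rw [hρ]; nlinarith [h2'.2]
      intro y hy
      exact intermediate_value_Icc (by linarith : t - δ ≤ t + δ) hGcont.continuousOn
        ⟨by linarith [hy.1], by linarith [hy.2]⟩
  have hgKne : ∀ s ∈ K, g s ≠ 0 := by
    intro s hs h0
    have h4 := hKball s hs
    rw [h0, hε] at h4
    simp only [zero_sub, abs_neg] at h4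
    linarith [abs_nonneg (g t)]
  set φ : ℝ → ℝ := fun s => (f (G₁ s) * g s) / g s with hφ
  have hφc : ContinuousAt φ t := hfgc.div hgc hgne
  have hφt : φ t = f (G₁ t) := by
    rw [hφ]; simp only; rw [mul_div_assoc, div_self hgne, mul_one]
  rw [Metric.continuousAt_iff]
  intro η hηpos
  obtain ⟨θ, hθpos, hθ⟩ := Metric.continuousAt_iff.1 hφc η hηpos
  refine ⟨min ρ (ε * θ), lt_min hρpos (by positivity), ?_⟩
  intro y hy
  rw [Real.dist_eq] at hy
  have hy1 : |y - G₁ t| < ρ := lt_of_lt_of_le hy (min_le_left _ _)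
  have hy2 : |y - G₁ t| < ε * θ := lt_of_lt_of_le hy (min_le_right _ _)
  have hy1' := abs_sub_le_iff.1 hy1.le
  have hymem : y ∈ Icc (G₁ t - ρ) (G₁ t + ρ) := ⟨by linarith [hy1'.2], by linarith [hy1'.1]⟩
  obtain ⟨s, hsK, hsy⟩ := hsurj hymem
  have hst : ε * |s - t| ≤ |y - G₁ t| := by
    have h5 := hlow t htK s hsK
    rwa [hsy] at h5
  have hstθ : |s - t| < θ := by
    by_contra hcon
    push_neg at hcon
    have : ε * θ ≤ ε * |s - t| := by nlinarith
    linarith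
  have hdist := hθ (show dist s t < θ by rwa [Real.dist_eq])
  have hφs : φ s = f y := by
    rw [hφ]; simp only
    rw [mul_div_assoc, div_self (hgKne s hsK), mul_one, hsy]
  rw [Real.dist_eq, ← hφs, ← hφt]
  rw [Real.dist_eq] at hdist
  exact hdist


/-- Riemann integrability of a bounded function on a set, via the Lebesgue criterion:
`f` is bounded on `s` and continuous (within `s`) at almost every point of `s`. -/
def RiemannIntegrableOn (f : ℝ → ℝ) (s : Set ℝ) : Prop :=
  (∃ C : ℝ, ∀ x ∈ s, |f x| ≤ C) ∧
    ∀ᵐ x ∂(volume.restrict s), ContinuousWithinAt f s x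

/-- The Preiss–Uher converse to Kestelman's change of variables theorem. -/
theorem preiss_uher_converse (a b c : ℝ) (hab : a ≤ b)
    (g G f : ℝ → ℝ)
    (hg : RiemannIntegrableOn g (Icc a b))
    (hG : ∀ t ∈ Icc a b, G t = c + ∫ x in a..t, g x)
    (hfbd : ∃ C : ℝ, ∀ y ∈ G '' Icc a b, |f y| ≤ C)
    (hfg : RiemannIntegrableOn (fun t => f (G t) * g t) (Icc a b)) :
    RiemannIntegrableOn f (G '' Icc a b) ∧
      ∫ y in G a..G b, f y = ∫ t in a..b, f (G t) * g t := by
  obtain ⟨⟨Cg, hCg⟩, hgae⟩ := hg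
  obtain ⟨⟨Cfg, hCfg⟩, hfgae⟩ := hfg
  obtain ⟨C, hC⟩ := hfbd
  have haI : a ∈ Icc a b := ⟨le_rfl, hab⟩
  have hbI : b ∈ Icc a b := ⟨hab, le_rfl⟩
  have hCg0 : 0 ≤ Cg := le_trans (abs_nonneg _) (hCg a haI)
  have hC0 : 0 ≤ C := le_trans (abs_nonneg _) (hC (G a) (mem_image_of_mem _ haI))
  have hIfin : volume (Icc a b) < ⊤ := measure_Icc_lt_top
  -- integrability of g
  have hgaesm : AEStronglyMeasurable g (volume.restrict (Icc a b)) :=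
    aux_aesm measurableSet_Icc hgae
  have hgint : IntegrableOn g (Icc a b) := aux_int measurableSet_Icc hIfin hgaesm hCg
  have hgii : ∀ u ∈ Icc a b, ∀ v ∈ Icc a b, IntervalIntegrable g volume u v :=
    fun u hu v hv => (hgint.mono_set (uIcc_subset_Icc hu hv)).intervalIntegrable
  -- the clamp and the extended primitive G₁
  set π : ℝ → ℝ := fun t => max a (min b t) with hπdef
  have hπmem : ∀ t, π t ∈ Icc a b := fun t => ⟨le_max_left _ _, max_le hab (min_le_left _ _)⟩
  have hπid : ∀ t ∈ Icc a b, π t = t := by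
    intro t ht
    simp only [hπdef]
    rw [min_eq_right ht.2, max_eq_right ht.1]
  have hπlip : ∀ s u : ℝ, |π s - π u| ≤ |s - u| := by
    intro s u
    simp only [hπdef]
    have h1 : |max a (min b s) - max a (min b u)| ≤ |min b s - min b u| := by
      rw [max_comm a (min b s), max_comm a (min b u)]
      exact abs_max_sub_max_le_abs _ _ _
    have h2 : |min b s - min b u| ≤ |s - u| := by
      rcases le_total s u with h | h
      · rcases le_total s b with h3 | h3 <;> rcases le_total u b with h4 | h4 <;>
          simp [min_eq_left, min_eq_right, h3, h4, abs_sub_le_iff] <;>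
          constructor <;> linarith [abs_sub_le_iff.1 (le_refl |s - u|)]
      · rcases le_total s b with h3 | h3 <;> rcases le_total u b with h4 | h4 <;>
          simp [min_eq_left, min_eq_right, h3, h4, abs_sub_le_iff] <;>
          constructor <;> linarith [abs_sub_le_iff.1 (le_refl |s - u|)]
    exact h1.trans h2
  set G₁ : ℝ → ℝ := fun t => c + ∫ x in a..(π t), g x with hG₁def
  have hG₁eq : ∀ t ∈ Icc a b, G₁ t = G t := by
    intro t ht
    rw [hG t ht, hG₁def]
    simp only
    rw [hπid t ht]
  have hG₁sub : ∀ u ∈ Icc a b, ∀ v ∈ Icc a b, G₁ v - G₁ u = ∫ x in u..v, g x := by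
    intro u hu v hv
    simp only [hG₁def, hπid u hu, hπid v hv]
    rw [add_sub_add_left_eq_sub]
    exact integral_interval_sub_left (hgii a haI v hv) (hgii a haI u hu)
  have hG₁lip : LipschitzWith (Real.toNNReal Cg) G₁ := by
    apply LipschitzWith.of_dist_le_mul
    intro s u
    rw [Real.dist_eq, Real.dist_eq]
    have h1 : G₁ s - G₁ u = ∫ x in (π u)..(π s), g x := by
      simp only [hG₁def, add_sub_add_left_eq_sub]
      exact integral_interval_sub_left (hgii a haI (π s) (hπmem s)) (hgii a haI (π u) (hπmem u))
    have h2 : |∫ x in (π u)..(π s), g x| ≤ Cg * |π s - π u| := by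
      have := intervalIntegral.norm_integral_le_of_norm_le_const (C := Cg)
        (f := g) (a := π u) (b := π s) ?_
      · simpa [Real.norm_eq_abs] using this
      · intro x hx
        have hxI : x ∈ Icc a b := (uIcc_subset_Icc (hπmem u) (hπmem s)) (uIoc_subset_uIcc hx)
        simpa [Real.norm_eq_abs] using hCg x hxI
    rw [h1]
    calc |∫ x in (π u)..(π s), g x| ≤ Cg * |π s - π u| := h2
      _ ≤ Cg * |s - u| := by nlinarith [hπlip s u, abs_nonneg (π s - π u)]
      _ = (Real.toNNReal Cg : ℝ) * |s - u| := by rw [Real.coe_toNNReal Cg hCg0]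
  have hG₁cont : Continuous G₁ := hG₁lip.continuous
  have hG₁deriv : ∀ t ∈ Ioo a b, ContinuousAt g t → HasDerivAt G₁ (g t) t := by
    intro t ht hc
    have h1 : HasDerivAt (fun u => c + ∫ x in a..u, g x) (g t) t := by
      apply HasDerivAt.const_add
      exact integral_hasDerivAt_right (hgii a haI t (Ioo_subset_Icc_self ht))
        ⟨Ioo a b, Ioo_mem_nhds ht.1 ht.2,
          hgaesm.mono_measure (Measure.restrict_mono Ioo_subset_Icc_self le_rfl)⟩ hc
    apply h1.congr_of_eventuallyEq
    filter_upwards [Ioo_mem_nhds ht.1 ht.2] with u hu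
    simp only [hG₁def, hπid u (Ioo_subset_Icc_self hu)]
  -- null sets of discontinuity
  rw [ae_iff] at hgae hfgae
  obtain ⟨Zg, hZgsub, hZgm, hZg0⟩ := exists_measurable_superset_of_null hgae
  obtain ⟨Zfg, hZfgsub, hZfgm, hZfg0⟩ := exists_measurable_superset_of_null hfgae
  set Ng : Set ℝ := Zg ∩ Icc a b with hNgdef
  set Nfg : Set ℝ := Zfg ∩ Icc a b with hNfgdef
  have hNg0 : volume Ng = 0 := by
    rw [hNgdef, ← Measure.restrict_apply hZgm]; exact hZg0
  have hNfg0 : volume Nfg = 0 := by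
    rw [hNfgdef, ← Measure.restrict_apply hZfgm]; exact hZfg0
  set N : Set ℝ := Ng ∪ Nfg with hNdef
  have hN0 : volume N = 0 := le_antisymm
    (le_trans (measure_union_le _ _) (by rw [hNg0, hNfg0]; simp)) zero_le
  have hgood : ∀ t ∈ Icc a b, t ∉ Ng → ContinuousWithinAt g (Icc a b) t := by
    intro t ht hn
    by_contra hc
    exact hn ⟨hZgsub (by simpa using hc), ht⟩
  have hfggood : ∀ t ∈ Icc a b, t ∉ Nfg →
      ContinuousWithinAt (fun s => f (G s) * g s) (Icc a b) t := by
    intro t ht hn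
    by_contra hc
    exact hn ⟨hZfgsub (by simpa using hc), ht⟩
  have hgoodAt : ∀ t ∈ Ioo a b, t ∉ Ng → ContinuousAt g t := fun t ht hn =>
    (hgood t (Ioo_subset_Icc_self ht) hn).continuousAt (Icc_mem_nhds ht.1 ht.2)
  have hfggoodAt : ∀ t ∈ Ioo a b, t ∉ Nfg → ContinuousAt (fun s => f (G₁ s) * g s) t := by
    intro t ht hn
    have h1 := (hfggood t (Ioo_subset_Icc_self ht) hn).continuousAt (Icc_mem_nhds ht.1 ht.2)
    apply h1.congr
    filter_upwards [Ioo_mem_nhds ht.1 ht.2] with u hu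
    rw [hG₁eq u (Ioo_subset_Icc_self hu)]
  -- the image interval J
  set J : Set ℝ := G '' Icc a b with hJdef
  have hGcont : ContinuousOn G (Icc a b) := by
    apply hG₁cont.continuousOn.congr
    intro t ht
    exact (hG₁eq t ht).symm
  have hJcompact : IsCompact J := isCompact_Icc.image_of_continuousOn hGcont
  have hJconn : IsConnected J :=
    ⟨⟨G a, mem_image_of_mem _ haI⟩, isPreconnected_Icc.image G hGcont⟩
  have hJeq : J = Icc (sInf J) (sSup J) := eq_Icc_of_connected_compact hJconn hJcompact
  set m := sInf J with hmdef
  set M := sSup J with hMdef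
  have hJm : MeasurableSet J := by rw [hJeq]; exact measurableSet_Icc
  have hGaJ : G a ∈ J := mem_image_of_mem _ haI
  have hGbJ : G b ∈ J := mem_image_of_mem _ hbI
  have hmM : m ≤ M := by
    have := hJeq ▸ hGaJ
    exact le_trans this.1 this.2
  -- zero-derivative set
  set Z0 : Set ℝ := {t | t ∈ Ioo a b ∧ t ∉ Ng ∧ g t = 0} with hZ0def
  have hZ0null : volume (G₁ '' Z0) = 0 := by
    apply aux_sard
    intro t ht
    have h1 : HasDerivAt G₁ (g t) t := hG₁deriv t ht.1 (hgoodAt t ht.1 ht.2.1)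
    rw [ht.2.2] at h1
    exact h1.hasDerivWithinAt
  set V : Set ℝ := ({G a, G b} ∪ G₁ '' N) ∪ G₁ '' Z0 with hVdef
  have hVnull : volume V = 0 := by
    rw [hVdef]
    refine le_antisymm (le_trans (measure_union_le _ _) ?_) zero_le
    rw [hZ0null, add_zero]
    refine le_trans (measure_union_le _ _) ?_
    rw [aux_lip_null hG₁lip hN0, add_zero]
    exact le_of_eq ((Set.toFinite ({G a, G b} : Set ℝ)).measure_zero _)
  -- continuity of f within J off V
  have hDsub : ∀ y ∈ J, y ∉ V → ContinuousAt f y := by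
    intro y hy hv
    obtain ⟨t, htI, hty⟩ := hy
    have hta : t ≠ a := by
      rintro rfl
      exact hv (Or.inl (Or.inl (Or.inl hty.symm)))
    have htb : t ≠ b := by
      rintro rfl
      exact hv (Or.inl (Or.inl (Or.inr hty.symm)))
    have ht0 : t ∈ Ioo a b := ⟨lt_of_le_of_ne htI.1 (Ne.symm hta), lt_of_le_of_ne htI.2 htb⟩
    have htN : t ∉ N := by
      intro h
      exact hv (Or.inl (Or.inr ⟨t, h, by rw [hG₁eq t htI, hty]⟩))
    have htNg : t ∉ Ng := fun h => htN (Or.inl h)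
    have htNfg : t ∉ Nfg := fun h => htN (Or.inr h)
    have hgt : g t ≠ 0 := by
      intro h0
      exact hv (Or.inr ⟨t, ⟨ht0, htNg, h0⟩, by rw [hG₁eq t htI, hty]⟩)
    set δ₀ := min (t - a) (b - t) with hδ₀def
    have hδ₀pos : 0 < δ₀ := lt_min (by linarith [ht0.1]) (by linarith [ht0.2])
    have hsubI : Icc (t - δ₀) (t + δ₀) ⊆ Icc a b := by
      apply Icc_subset_Icc
      · have := min_le_left (t - a) (b - t); linarith
      · have := min_le_right (t - a) (b - t); linarith
    have h1 : ContinuousAt f (G₁ t) := by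
      apply contAt_transfer G₁ g f t δ₀ hδ₀pos hG₁cont
      · exact hgii _ (hsubI ⟨le_rfl, by linarith⟩) _ (hsubI ⟨by linarith, le_rfl⟩)
      · intro u hu v hv
        exact hG₁sub u (hsubI hu) v (hsubI hv)
      · exact hgoodAt t ht0 htNg
      · exact hgt
      · exact hfggoodAt t ht0 htNfg
    rw [hG₁eq t htI, hty] at h1
    exact h1
  -- Part 1
  have part1 : RiemannIntegrableOn f J := by
    refine ⟨⟨C, hC⟩, ?_⟩
    rw [ae_iff]
    refine le_antisymm (le_trans ?_ (le_of_eq hVnull)) zero_le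
    rw [Measure.restrict_apply' hJm]
    apply measure_mono
    rintro y ⟨hnc, hyJ⟩
    by_contra hyV
    exact hnc ((hDsub y hyJ hyV).continuousWithinAt)
  refine ⟨part1, ?_⟩
  -- clamp onto J and modified f
  set πJ : ℝ → ℝ := fun y => max m (min M y) with hπJdef
  have hπJmem : ∀ y, πJ y ∈ J := by
    intro y
    rw [hJeq]
    exact ⟨le_max_left _ _, max_le hmM (min_le_left _ _)⟩
  have hπJid : ∀ y ∈ J, πJ y = y := by
    intro y hy
    have hy' := hJeq ▸ hy
    simp only [hπJdef]
    rw [min_eq_right hy'.2, max_eq_right hy'.1]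
  have hπJcont : Continuous πJ := continuous_const.max (continuous_const.min continuous_id)
  set f₀ : ℝ → ℝ := fun y => f (πJ y) with hf₀def
  have hf₀bd : ∀ y, |f₀ y| ≤ C := fun y => hC _ (hπJmem y)
  have hf₀eq : ∀ y ∈ J, f₀ y = f y := fun y hy => by rw [hf₀def]; simp only; rw [hπJid y hy]
  have hf₀cont : ∀ y, y ∉ V → ContinuousAt f₀ y := by
    intro y hyV
    by_cases hyJ : y ∈ J
    · have h1 : ContinuousAt f (πJ y) := by rw [hπJid y hyJ]; exact hDsub y hyJ hyV
      exact h1.comp hπJcont.continuousAt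
    · rw [hJeq] at hyJ
      simp only [mem_Icc, not_and_or, not_le] at hyJ
      rcases hyJ with hy | hy
      · have : ∀ z ∈ Iio m, f₀ z = f m := by
          intro z hz
          simp only [hf₀def, hπJdef]
          rw [min_eq_right (le_of_lt (lt_of_lt_of_le hz hmM)), max_eq_left (le_of_lt hz)]
        rw [continuousAt_congr (Filter.eventuallyEq_of_mem (Iio_mem_nhds hy) this)]
        exact continuousAt_const
      · have : ∀ z ∈ Ioi M, f₀ z = f M := by
          intro z hz
          simp only [hf₀def, hπJdef]
          rw [min_eq_left (le_of_lt hz), max_eq_right hmM]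
        rw [continuousAt_congr (Filter.eventuallyEq_of_mem (Ioi_mem_nhds hy) this)]
        exact continuousAt_const
  have hf₀aesm : AEStronglyMeasurable f₀ volume := by
    have h1 : ∀ᵐ y ∂(volume.restrict (univ : Set ℝ)), ContinuousWithinAt f₀ univ y := by
      rw [ae_iff]
      rw [Measure.restrict_univ]
      refine le_antisymm (le_trans (measure_mono ?_) (le_of_eq hVnull)) zero_le
      intro y hy
      simp only [mem_setOf_eq, continuousWithinAt_univ] at hy
      by_contra hyV
      exact hy (hf₀cont y hyV)
    have := aux_aesm MeasurableSet.univ h1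
    rwa [Measure.restrict_univ] at this
  have hf₀ii : ∀ u v : ℝ, IntervalIntegrable f₀ volume u v := by
    intro u v
    constructor <;>
    · apply Integrable.mono' (integrableOn_const (C := C) measure_Ioc_lt_top.ne)
        (hf₀aesm.restrict)
      exact ae_of_all _ (fun x => by simpa using hf₀bd x)
  -- the primitive F and H = F ∘ G₁
  set F : ℝ → ℝ := fun y => ∫ x in (G a)..y, f₀ x with hFdef
  have hFlip : LipschitzWith (Real.toNNReal C) F := by
    apply LipschitzWith.of_dist_le_mul
    intro s u
    rw [Real.dist_eq, Real.dist_eq]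
    have h1 : F s - F u = ∫ x in u..s, f₀ x := by
      simp only [hFdef]
      exact integral_interval_sub_left (hf₀ii (G a) s) (hf₀ii (G a) u)
    rw [h1, Real.coe_toNNReal C hC0]
    have := intervalIntegral.norm_integral_le_of_norm_le_const (C := C)
      (f := f₀) (a := u) (b := s) (fun x _ => by simpa [Real.norm_eq_abs] using hf₀bd x)
    simpa [Real.norm_eq_abs, abs_sub_comm s u] using this
  set H : ℝ → ℝ := fun t => F (G₁ t) with hHdef
  have hHlip : LipschitzWith (Real.toNNReal C * Real.toNNReal Cg) H := hFlip.comp hG₁lip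
  have hHcont : Continuous H := hHlip.continuous
  set h : ℝ → ℝ := fun t => f (G₁ t) * g t with hhdef
  have hDeriv : ∀ t ∈ Ioo a b, t ∉ N → HasDerivAt H (h t) t := by
    intro t ht htN
    have htNg : t ∉ Ng := fun hx => htN (Or.inl hx)
    have htNfg : t ∉ Nfg := fun hx => htN (Or.inr hx)
    have hgc := hgoodAt t ht htNg
    have hGd : HasDerivAt G₁ (g t) t := hG₁deriv t ht hgc
    by_cases h0 : g t = 0
    · have h1 : HasDerivAt G₁ 0 t := by rw [h0] at hGd; exact hGd
      have h2 := aux_squeeze hFlip h1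
      have h3 : h t = 0 := by rw [hhdef]; simp [h0]
      rw [h3]
      exact h2
    · set δ₀ := min (t - a) (b - t) with hδ₀def
      have hδ₀pos : 0 < δ₀ := lt_min (by linarith [ht.1]) (by linarith [ht.2])
      have hsubI : Icc (t - δ₀) (t + δ₀) ⊆ Icc a b := by
        apply Icc_subset_Icc
        · have := min_le_left (t - a) (b - t); linarith
        · have := min_le_right (t - a) (b - t); linarith
      have hfc : ContinuousAt f (G₁ t) := by
        apply contAt_transfer G₁ g f t δ₀ hδ₀pos hG₁cont
        · exact hgii _ (hsubI ⟨le_rfl, by linarith⟩) _ (hsubI ⟨by linarith, le_rfl⟩)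
        · intro u hu v hv
          exact hG₁sub u (hsubI hu) v (hsubI hv)
        · exact hgc
        · exact h0
        · exact hfggoodAt t ht htNfg
      have hG₁tJ : G₁ t ∈ J := by
        rw [hG₁eq t (Ioo_subset_Icc_self ht)]
        exact mem_image_of_mem _ (Ioo_subset_Icc_self ht)
      have hf₀c : ContinuousAt f₀ (G₁ t) := by
        have h1 : ContinuousAt f (πJ (G₁ t)) := by rw [hπJid _ hG₁tJ]; exact hfc
        exact h1.comp hπJcont.continuousAt
      have hFd : HasDerivAt F (f₀ (G₁ t)) (G₁ t) :=
        integral_hasDerivAt_right (hf₀ii _ _)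
          ⟨univ, univ_mem, by rwa [Measure.restrict_univ]⟩ hf₀c
      have h2 := hFd.comp t hGd
      have h3 : h t = f₀ (G₁ t) * g t := by
        rw [hhdef]; simp only; rw [hf₀eq _ hG₁tJ]
      rw [h3]
      exact h2
  -- dominated convergence setup
  set δn : ℕ → ℝ := fun n => 1/(n+1) with hδndef
  have hδnpos : ∀ n : ℕ, 0 < δn n := fun n => by positivity
  set hn : ℕ → ℝ → ℝ := fun n t => (H (t + δn n) - H t) / δn n with hhndef
  have hcoe : ((Real.toNNReal C * Real.toNNReal Cg : NNReal) : ℝ) = C * Cg := by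
    push_cast
    rw [Real.coe_toNNReal _ hC0, Real.coe_toNNReal _ hCg0]
  have hbound : ∀ (n : ℕ) (t : ℝ), |hn n t| ≤ C * Cg := by
    intro n t
    simp only [hhndef]
    rw [abs_div, abs_of_pos (hδnpos n), div_le_iff₀ (hδnpos n)]
    calc |H (t + δn n) - H t| = dist (H (t + δn n)) (H t) := (Real.dist_eq _ _).symm
      _ ≤ ((Real.toNNReal C * Real.toNNReal Cg : NNReal) : ℝ) * dist (t + δn n) t :=
          hHlip.dist_le_mul _ _
      _ = C * Cg * δn n := by
          rw [hcoe, Real.dist_eq, add_sub_cancel_left, abs_of_pos (hδnpos n)]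
  have hlim : ∀ᵐ t ∂(volume.restrict (Ioc a b)),
      Tendsto (fun nn => hn nn t) atTop (𝓝 (h t)) := by
    rw [ae_iff]
    apply le_antisymm _ zero_le
    rw [Measure.restrict_apply' measurableSet_Ioc]
    have hNb : volume (N ∪ ({b} : Set ℝ)) = 0 :=
      le_antisymm (le_trans (measure_union_le _ _) (by rw [hN0]; simp)) zero_le
    refine le_trans (measure_mono ?_) (le_of_eq hNb)
    rintro t ⟨hnt, htIoc⟩
    by_contra hcon
    apply hnt
    have htb : t ≠ b := fun hh => hcon (Or.inr hh)
    have htIoo : t ∈ Ioo a b := ⟨htIoc.1, lt_of_le_of_ne htIoc.2 htb⟩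
    have hD := hDeriv t htIoo (fun hh => hcon (Or.inl hh))
    have h1 := aux_slope hD
    simp only [hhndef, hδndef]
    exact h1
  have hmeasn : ∀ n : ℕ, AEStronglyMeasurable (hn n) (volume.restrict (Ioc a b)) := by
    intro n
    apply Continuous.aestronglyMeasurable
    exact ((hHcont.comp (continuous_id.add continuous_const)).sub hHcont).div_const _
  have hDCT := tendsto_integral_of_dominated_convergence (F := hn)
      (f := h) (bound := fun _ => C * Cg) hmeasn
      (integrableOn_const measure_Ioc_lt_top.ne)
      (fun n => ae_of_all _ (fun t => by simpa [Real.norm_eq_abs] using hbound n t)) hlim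
  have hH1 : ∀ u v : ℝ, IntervalIntegrable H volume u v := fun u v =>
    hHcont.intervalIntegrable u v
  have hint_eval : ∀ n : ℕ, ∫ t in Ioc a b, hn n t =
      ((∫ x in b..(b + δn n), H x) - ∫ x in a..(a + δn n), H x) / δn n := by
    intro n
    rw [← intervalIntegral.integral_of_le hab]
    have hH2 : IntervalIntegrable (fun t => H (t + δn n)) volume a b :=
      (hHcont.comp (continuous_id.add continuous_const)).intervalIntegrable a b
    have e1 : (∫ x in a..(a + δn n), H x) + ∫ x in (a + δn n)..(b + δn n), H x
        = ∫ x in a..(b + δn n), H x := integral_add_adjacent_intervals (hH1 _ _) (hH1 _ _)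
    have e2 : (∫ x in a..b, H x) + ∫ x in b..(b + δn n), H x
        = ∫ x in a..(b + δn n), H x := integral_add_adjacent_intervals (hH1 _ _) (hH1 _ _)
    calc ∫ t in a..b, hn n t = (∫ t in a..b, (H (t + δn n) - H t)) / δn n := by
          simp only [hhndef]
          rw [intervalIntegral.integral_div]
      _ = ((∫ t in a..b, H (t + δn n)) - ∫ t in a..b, H t) / δn n := by
          rw [intervalIntegral.integral_sub hH2 (hH1 a b)]
      _ = ((∫ x in (a + δn n)..(b + δn n), H x) - ∫ x in a..b, H x) / δn n := by
          rw [intervalIntegral.integral_comp_add_right (fun x => H x) (δn n)]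
      _ = ((∫ x in b..(b + δn n), H x) - ∫ x in a..(a + δn n), H x) / δn n := by
          congr 1
          linarith [e1, e2]
  have hlimR : Tendsto (fun n : ℕ =>
      ((∫ x in b..(b + δn n), H x) - ∫ x in a..(a + δn n), H x) / δn n) atTop
      (𝓝 (H b - H a)) := by
    have hmsf : StronglyMeasurableAtFilter H (𝓝 b) volume :=
      ⟨univ, univ_mem, by rw [Measure.restrict_univ]; exact hHcont.aestronglyMeasurable⟩
    have hmsf' : StronglyMeasurableAtFilter H (𝓝 a) volume :=
      ⟨univ, univ_mem, by rw [Measure.restrict_univ]; exact hHcont.aestronglyMeasurable⟩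
    have hb' : HasDerivAt (fun y => ∫ x in b..y, H x) (H b) b :=
      integral_hasDerivAt_right (hH1 _ _) hmsf hHcont.continuousAt
    have ha' : HasDerivAt (fun y => ∫ x in a..y, H x) (H a) a :=
      integral_hasDerivAt_right (hH1 _ _) hmsf' hHcont.continuousAt
    have h1 := aux_slope hb'
    have h2 := aux_slope ha'
    simp only [integral_same, sub_zero] at h1 h2
    have h3 := h1.sub h2
    refine Tendsto.congr (fun n => ?_) h3
    simp only [hδndef]
    rw [← sub_div]
  have hIoc_eq : ∫ t in Ioc a b, h t = H b - H a := by
    have hDCT' : Tendsto (fun n : ℕ =>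
        ((∫ x in b..(b + δn n), H x) - ∫ x in a..(a + δn n), H x) / δn n) atTop
        (𝓝 (∫ t in Ioc a b, h t)) := by
      refine Tendsto.congr (fun n => ?_) hDCT
      exact hint_eval n
    exact tendsto_nhds_unique hDCT' hlimR
  have hHb : H b = F (G b) := by rw [hHdef]; simp only; rw [hG₁eq b hbI]
  have hHa : H a = F (G a) := by rw [hHdef]; simp only; rw [hG₁eq a haI]
  have hFa : F (G a) = 0 := integral_same
  have hstep1 : ∫ t in a..b, f (G t) * g t = ∫ t in Ioc a b, h t := by
    rw [intervalIntegral.integral_of_le hab]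
    apply setIntegral_congr_fun measurableSet_Ioc
    intro t ht
    simp only [hhdef]
    rw [hG₁eq t (Ioc_subset_Icc_self ht)]
  have hstep2 : ∫ y in (G a)..(G b), f y = F (G b) := by
    rw [hFdef]
    simp only
    apply intervalIntegral.integral_congr
    intro y hy
    have hyJ : y ∈ J := by
      rw [hJeq]
      exact uIcc_subset_Icc (hJeq ▸ hGaJ) (hJeq ▸ hGbJ) hy
    exact (hf₀eq y hyJ).symm
  rw [hstep2, hstep1, hIoc_eq, hHb, hHa, hFa, sub_zero]
end

section
/- If A ⊆ ℝ^m is Jordan measurable and G : A → ℝ^m is a Lipschitz map that is strongly differentiable at almost all interior points of A, then G(A) is Jordan measurable. -/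
open Set Metric MeasureTheory

/-- A set is Jordan measurable if it is bounded and its boundary is a null set. -/
def JordanMeasurable {m : ℕ} (X : Set (Fin m → ℝ)) : Prop :=
  Bornology.IsBounded X ∧ volume (frontier X) = 0

/-- `f` is strongly (strictly) differentiable at `u`, an interior point of `s`,
with derivative `A`. -/
def HasStrongDerivAt {m n : ℕ} (f : (Fin m → ℝ) → (Fin n → ℝ))
    (A : (Fin m → ℝ) →L[ℝ] (Fin n → ℝ)) (s : Set (Fin m → ℝ)) (u : Fin m → ℝ) : Prop :=
  ∀ ε > (0 : ℝ), ∃ δ > (0 : ℝ), ball u δ ⊆ s ∧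
    ∀ x ∈ ball u δ, ∀ y ∈ ball u δ, ‖f x - f y - A (x - y)‖ ≤ ε * ‖x - y‖

lemma volume_eq_hausdorff (m : ℕ) : (volume : Measure (Fin m → ℝ)) = μH[m] := by
  rw [← hausdorffMeasure_pi_real (ι := Fin m), Fintype.card_fin]

lemma lipschitz_image_null {m : ℕ} {K : NNReal} {F : (Fin m → ℝ) → (Fin m → ℝ)}
    (hF : LipschitzWith K F) {s : Set (Fin m → ℝ)} (hs : volume s = 0) :
    volume (F '' s) = 0 := by
  have h := hF.hausdorffMeasure_image_le (d := (m : ℝ)) (by positivity) s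
  rw [volume_eq_hausdorff] at hs ⊢
  refine le_antisymm (h.trans ?_) zero_le
  rw [hs, mul_zero]

lemma HasStrongDerivAt.hasFDerivAt {m n : ℕ} {G : (Fin m → ℝ) → (Fin n → ℝ)}
    {B : (Fin m → ℝ) →L[ℝ] (Fin n → ℝ)} {A : Set (Fin m → ℝ)} {x : Fin m → ℝ}
    (h : HasStrongDerivAt G B A x) : HasFDerivAt G B x := by
  rw [HasFDerivAt, hasFDerivAtFilter_iff_isLittleO, Asymptotics.isLittleO_iff]
  intro c hc
  obtain ⟨δ, hδ, -, h⟩ := h c hc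
  filter_upwards [Filter.prod_mem_prod (ball_mem_nhds x hδ) (Filter.mem_pure.2 (mem_ball_self hδ))] with z hz
  simpa using h z.1 hz.1 z.2 hz.2

/-- The image of a Jordan measurable set under a Lipschitz map that is strongly
differentiable at almost every interior point is Jordan measurable. -/
theorem image_jordanMeasurable {m : ℕ} (A : Set (Fin m → ℝ)) (hA : JordanMeasurable A)
    (G : (Fin m → ℝ) → (Fin m → ℝ)) (L : NNReal) (hG : LipschitzOnWith L G A)
    (hdiff : ∃ N : Set (Fin m → ℝ), volume N = 0 ∧ ∀ x ∈ interior A \ N,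
      ∃ B : (Fin m → ℝ) →L[ℝ] (Fin m → ℝ), HasStrongDerivAt G B A x) :
    JordanMeasurable (G '' A) := by
  classical
  obtain ⟨hAb, hAf⟩ := hA
  obtain ⟨N, hN, hdiff⟩ := hdiff
  obtain ⟨F, hFL, hFG⟩ := hG.extend_pi
  have himg : G '' A = F '' A := image_congr hFG
  rw [himg]
  refine ⟨hFL.isBounded_image hAb, ?_⟩
  -- choose derivatives
  set D : (Fin m → ℝ) → ((Fin m → ℝ) →L[ℝ] (Fin m → ℝ)) :=
    fun x => if h : x ∈ interior A \ N then (hdiff x h).choose else 0 with hDdef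
  have hD : ∀ x ∈ interior A \ N, HasStrongDerivAt G (D x) A x := by
    intro x h
    rw [hDdef]
    simp only [h, dif_pos]
    exact (hdiff x h).choose_spec
  set S := {x | x ∈ interior A \ N ∧ (D x).det = 0} with hSdef
  -- interior points with invertible derivative map to interior points of the image
  have hint : ∀ x ∈ interior A \ N, (D x).det ≠ 0 → F x ∈ interior (F '' A) := by
    intro x hx hdet
    rcases subsingleton_or_nontrivial (Fin m → ℝ) with hsub | hns
    · have hxA : F x ∈ F '' A := mem_image_of_mem F (interior_subset hx.1)
      have : F '' A = univ := eq_univ_of_forall fun z => Subsingleton.elim z (F x) ▸ hxA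
      rw [this, interior_univ]
      trivial
    · set B' := (D x).toContinuousLinearEquivOfDetNeZero hdet with hB'
      have hnn : ‖(B'.symm : (Fin m → ℝ) →L[ℝ] (Fin m → ℝ))‖₊ ≠ 0 := by
        intro h0
        obtain ⟨y, hy⟩ := exists_ne (0 : Fin m → ℝ)
        have hz : ∀ z, B'.symm z = 0 := fun z => norm_le_zero_iff.1
            (le_trans ((B'.symm : (Fin m → ℝ) →L[ℝ] (Fin m → ℝ)).le_opNorm z)
              (by rw [← coe_nnnorm, h0]; simp))
        have := hz (B' y)
        simp at this
        exact hy this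
      set c : NNReal := ‖(B'.symm : (Fin m → ℝ) →L[ℝ] (Fin m → ℝ))‖₊⁻¹ / 2 with hc
      have hcpos : 0 < c := by positivity
      obtain ⟨δ, hδ, hballA, happrox⟩ := hD x hx (c : ℝ) (by exact_mod_cast hcpos)
      have happ : ApproximatesLinearOn F
          (B' : (Fin m → ℝ) →L[ℝ] (Fin m → ℝ)) (ball x δ) c := by
        intro p hp q hq
        have h1 := happrox p hp q hq
        rw [hFG (hballA hp), hFG (hballA hq)] at h1
        simpa [hB', ContinuousLinearMap.coe_toContinuousLinearEquivOfDetNeZero] using h1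
      have hclt : c < B'.toNonlinearRightInverse.nnnorm⁻¹ := by
        have : B'.toNonlinearRightInverse.nnnorm
            = ‖(B'.symm : (Fin m → ℝ) →L[ℝ] (Fin m → ℝ))‖₊ := rfl
        rw [this, hc]
        exact NNReal.half_lt_self (by simpa using hnn)
      have hopen := happ.open_image B'.toNonlinearRightInverse isOpen_ball (Or.inr hclt)
      have hsub : F '' ball x δ ⊆ interior (F '' A) :=
        interior_maximal (image_mono (f := F) hballA) hopen
      exact hsub (mem_image_of_mem F (mem_ball_self hδ))
  -- decompose the frontier of the image
  have hsub : frontier (F '' A) ⊆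
      F '' (frontier A) ∪ F '' (interior A ∩ N) ∪ F '' S := by
    intro y hy
    have hyc : y ∈ closure (F '' A) := frontier_subset_closure hy
    have hclose : closure (F '' A) ⊆ F '' closure A :=
      closure_minimal (image_mono (f := F) subset_closure)
        (hAb.isCompact_closure.image hFL.continuous).isClosed
    obtain ⟨x, hx, rfl⟩ := hclose hyc
    by_cases hxi : x ∈ interior A
    · by_cases hxN : x ∈ N
      · exact Or.inl (Or.inr ⟨x, ⟨hxi, hxN⟩, rfl⟩)
      · by_cases hdet : (D x).det = 0
        · exact Or.inr ⟨x, ⟨⟨hxi, hxN⟩, hdet⟩, rfl⟩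
        · rw [← closure_diff_interior] at hy
          exact absurd (hint x ⟨hxi, hxN⟩ hdet) hy.2
    · refine Or.inl (Or.inl ⟨x, ?_, rfl⟩)
      rw [← closure_diff_interior]
      exact ⟨hx, hxi⟩
  refine measure_mono_null hsub
    (measure_union_null (measure_union_null ?_ ?_) ?_)
  · exact lipschitz_image_null hFL hAf
  · exact lipschitz_image_null hFL (measure_mono_null inter_subset_right hN)
  · apply addHaar_image_eq_zero_of_det_fderivWithin_eq_zero volume (f' := D)
    · intro x hx
      have heq : F =ᶠ[nhds x] G := by
        filter_upwards [isOpen_interior.mem_nhds hx.1.1] with z hz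
        exact (hFG (interior_subset hz)).symm
      exact (((hD x hx.1).hasFDerivAt).congr_of_eventuallyEq heq).hasFDerivWithinAt
    · intro x hx
      exact hx.2
end
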